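/- The Heisenberg translation by (τ, v), acting on lifts in ℂ³ as the lower-triangular unipotent matrix T(τ,v) = [[1,0,0],[τ,1,0],[(-|τ|²+iv)/2, -conj(τ), 1]] (suitably normalized), satisfies: H₂ = [[1,0,0],[conj(ω),1,0],[-ω,-ω,1]] is the Heisenberg translation by (-ω, √3), and H₁·H₂² is the vertical translation by (0, 4√3), where ω = (1-i√3)/2 and H₁ = [[1,0,0],[-2conj(ω),1,0],[-2ω-1,2ω,1]]. -/

import Mathlib

open Complex Matrix

noncomputable section

def ω : ℂ := (1 - Complex.I * Real.sqrt 3) / 2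

def heisTransl (τ : ℂ) (v : ℝ) : Matrix (Fin 3) (Fin 3) ℂ :=
  !![1, 0, 0;
     -(starRingEnd ℂ) τ, 1, 0;
     (-(‖τ‖ : ℂ) ^ 2 + v * Complex.I) / 2, τ, 1]

def H₁ : Matrix (Fin 3) (Fin 3) ℂ :=
  !![1, 0, 0; -2 * (starRingEnd ℂ) ω, 1, 0; -2 * ω - 1, 2 * ω, 1]

def H₂ : Matrix (Fin 3) (Fin 3) ℂ :=
  !![1, 0, 0; (starRingEnd ℂ) ω, 1, 0; -ω, -ω, 1]

lemma hr3 : (Real.sqrt 3 : ℝ) ^ 2 = 3 := Real.sq_sqrt (by norm_num)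

lemma conj_ω : (starRingEnd ℂ) ω = (1 + Complex.I * Real.sqrt 3) / 2 := by
  rw [ω]
  simp [Complex.ext_iff, Complex.div_re, Complex.div_im, Complex.normSq_apply]
  ring

lemma habsR : ‖(1 - Complex.I * Real.sqrt 3)‖ ^ 2 = 4 := by
  rw [Complex.sq_norm]
  simp [Complex.normSq_apply]
  nlinarith [hr3]

lemma habs : (‖(1 - Complex.I * Real.sqrt 3)‖ : ℂ) ^ 2 = 4 := by
  have : ((‖(1 - Complex.I * Real.sqrt 3)‖ : ℝ) : ℂ) ^ 2
      = (Complex.normSq (1 - Complex.I * Real.sqrt 3) : ℂ) := by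
    norm_cast; exact Complex.sq_norm _
  rw [this]
  have : Complex.normSq (1 - Complex.I * Real.sqrt 3) = 4 := by
    simp [Complex.normSq_apply, hr3]
    nlinarith [hr3]
  rw [this]; norm_num

/-- `H₂` is the Heisenberg translation by `(-ω, √3)` and `H₁·H₂²` is the vertical
translation by `(0, 4√3)`. -/
theorem torus_holonomy_translations :
    H₂ = heisTransl (-ω) (Real.sqrt 3) ∧
    H₁ * H₂ ^ 2 = heisTransl 0 (4 * Real.sqrt 3) := by
  have hc := conj_ω
  constructor
  · ext i j
    fin_cases i <;> fin_cases j <;>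
      simp [H₂, heisTransl, hc, ω, habs, habsR] <;> ring_nf <;>
      simp [Complex.ext_iff, ← Complex.ofReal_pow, hr3, habs, habsR] <;> ring
  · ext i j
    fin_cases i <;> fin_cases j <;>
      simp [H₁, H₂, heisTransl, pow_succ, Matrix.mul_apply, Fin.sum_univ_three, hc, ω] <;>
      ring_nf <;>
      simp [Complex.ext_iff, ← Complex.ofReal_pow, hr3, habs, habsR] <;> ring

end
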